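/- Fix real numbers x⁺, x⁻, integers m, k ≥ 1, n = m + k, and p̂ = m/n. Let u ∈ ℝ^m and v ∈ ℝ^k satisfy max_i u_i ≤ min_j v_j. Then there exist real numbers s and t with s ≤ t such that p̂·(x⁺ − s)² + (1−p̂)·(x⁻ − t)² ≤ (1/n)·(∑_{i=1}^m (x⁺ − u_i)² + ∑_{j=1}^k (x⁻ − v_j)²). -/

import Mathlib

/-- Step 3 of the proof of Proposition 2: any misranking perturbation is dominated in cost
by one moving all positives to a single point `s` and all negatives to a single point `t`
with `s ≤ t`. -/
theorem collapse_to_single_points (xp xm : ℝ) (m k : ℕ) (hm : 1 ≤ m) (hk : 1 ≤ k)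
    (n : ℕ) (hn : n = m + k) (phat : ℝ) (hp : phat = (m : ℝ) / (n : ℝ))
    (u : Fin m → ℝ) (v : Fin k → ℝ) (huv : ∀ i j, u i ≤ v j) :
    ∃ s t : ℝ, s ≤ t ∧
      phat * (xp - s) ^ 2 + (1 - phat) * (xm - t) ^ 2
        ≤ (1 / (n : ℝ)) * ((∑ i, (xp - u i) ^ 2) + ∑ j, (xm - v j) ^ 2) := by
  have hnpos : (0:ℝ) < (n:ℝ) := by
    have : 0 < n := by omega
    exact_mod_cast this
  obtain ⟨i₀, -, hi₀⟩ := Finset.exists_min_image Finset.univ (fun i => (xp - u i) ^ 2)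
    (Finset.univ_nonempty_iff.2 ⟨⟨0, hm⟩⟩)
  obtain ⟨j₀, -, hj₀⟩ := Finset.exists_min_image Finset.univ (fun j => (xm - v j) ^ 2)
    (Finset.univ_nonempty_iff.2 ⟨⟨0, hk⟩⟩)
  refine ⟨u i₀, v j₀, huv i₀ j₀, ?_⟩
  have h1 : (m:ℝ) * (xp - u i₀) ^ 2 ≤ ∑ i, (xp - u i) ^ 2 := by
    calc (m:ℝ) * (xp - u i₀) ^ 2 = ∑ _i : Fin m, (xp - u i₀) ^ 2 := by
          simp [Finset.sum_const, mul_comm]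
      _ ≤ ∑ i, (xp - u i) ^ 2 :=
          Finset.sum_le_sum (fun i _ => hi₀ i (Finset.mem_univ i))
  have h2 : (k:ℝ) * (xm - v j₀) ^ 2 ≤ ∑ j, (xm - v j) ^ 2 := by
    calc (k:ℝ) * (xm - v j₀) ^ 2 = ∑ _j : Fin k, (xm - v j₀) ^ 2 := by
          simp [Finset.sum_const, mul_comm]
      _ ≤ ∑ j, (xm - v j) ^ 2 :=
          Finset.sum_le_sum (fun j _ => hj₀ j (Finset.mem_univ j))
  have hpk : 1 - phat = (k:ℝ) / (n:ℝ) := by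
    rw [hp, eq_div_iff hnpos.ne', sub_mul, div_mul_cancel₀ _ hnpos.ne', hn]; push_cast; ring
  rw [hp]
  rw [show (1 - (m:ℝ)/(n:ℝ)) = (k:ℝ)/(n:ℝ) by rw [← hp]; exact hpk]
  rw [div_mul_eq_mul_div, div_mul_eq_mul_div, ← add_div, one_div,
    inv_mul_eq_div, div_le_div_iff₀ hnpos hnpos]
  nlinarith [h1, h2]
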